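/- For n≥2, there is an injective group homomorphism i_n: B(Ã_n) → B(B_{n+1}) sending σ_i ↦ σ_i for 1≤i≤n and a_{n+1} ↦ φ_{n+1}σ_nφ_{n+1}^{-1}, where φ_{n+1} = tσ_1⋯σ_n; that is, the subgroup of B(B_{n+1}) generated by σ_1,…,σ_n and φ_{n+1}σ_nφ_{n+1}^{-1} is presented by exactly the defining relations of B(Ã_n). -/

import Mathlib

/-- Relators of the `B`-type braid group `B(B_{n+1})`: generator `some i` (`i : Fin n`)
stands for `σ_{i+1}`, and `none` stands for `t`. -/
def braidRelsB (n : ℕ) : Set (FreeGroup (Option (Fin n))) :=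
  { r | (∃ i j : Fin n, (i : ℕ) + 2 ≤ (j : ℕ) ∧
          r = FreeGroup.of (some i) * FreeGroup.of (some j) *
              (FreeGroup.of (some j) * FreeGroup.of (some i))⁻¹) ∨
        (∃ i j : Fin n, (j : ℕ) = (i : ℕ) + 1 ∧
          r = FreeGroup.of (some i) * FreeGroup.of (some j) * FreeGroup.of (some i) *
              (FreeGroup.of (some j) * FreeGroup.of (some i) * FreeGroup.of (some j))⁻¹) ∨
        (∃ i : Fin n, 1 ≤ (i : ℕ) ∧
          r = FreeGroup.of (some i) * FreeGroup.of none *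
              (FreeGroup.of none * FreeGroup.of (some i))⁻¹) ∨
        (∃ i : Fin n, (i : ℕ) = 0 ∧
          r = FreeGroup.of (some i) * FreeGroup.of none * FreeGroup.of (some i) *
              FreeGroup.of none *
              (FreeGroup.of none * FreeGroup.of (some i) * FreeGroup.of none *
                FreeGroup.of (some i))⁻¹) }

/-- The `B`-type braid group `B(B_{n+1})`, with generators `σ_1, …, σ_n` and `t`. -/
abbrev BraidB (n : ℕ) : Type := PresentedGroup (braidRelsB n)

/-- `φ_{n+1} = t σ_1 σ_2 ⋯ σ_n` in `B(B_{n+1})`. -/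
noncomputable def phiB (n : ℕ) : BraidB n :=
  PresentedGroup.of none *
    ((List.finRange n).map fun i => (PresentedGroup.of (some i) : BraidB n)).prod

/-- `a_{n+1} = φ_{n+1} σ_n φ_{n+1}⁻¹` in `B(B_{n+1})`. -/
noncomputable def aB (n : ℕ) (h : 0 < n) : BraidB n :=
  phiB n * PresentedGroup.of (some (⟨n - 1, by omega⟩ : Fin n)) * (phiB n)⁻¹

/-- Relators of the affine braid group `B(Ã_n)`: generator `some i` (`i : Fin n`)
stands for `σ_{i+1}`, and `none` stands for `a_{n+1}`. -/
def braidRelsAff (n : ℕ) : Set (FreeGroup (Option (Fin n))) :=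
  { r | (∃ i j : Fin n, (i : ℕ) + 2 ≤ (j : ℕ) ∧
          r = FreeGroup.of (some i) * FreeGroup.of (some j) *
              (FreeGroup.of (some j) * FreeGroup.of (some i))⁻¹) ∨
        (∃ i j : Fin n, (j : ℕ) = (i : ℕ) + 1 ∧
          r = FreeGroup.of (some i) * FreeGroup.of (some j) * FreeGroup.of (some i) *
              (FreeGroup.of (some j) * FreeGroup.of (some i) * FreeGroup.of (some j))⁻¹) ∨
        (∃ i : Fin n, 1 ≤ (i : ℕ) ∧ (i : ℕ) + 2 ≤ n ∧
          r = FreeGroup.of (some i) * FreeGroup.of none *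
              (FreeGroup.of none * FreeGroup.of (some i))⁻¹) ∨
        (∃ i : Fin n, ((i : ℕ) = 0 ∨ (i : ℕ) + 1 = n) ∧
          r = FreeGroup.of (some i) * FreeGroup.of none * FreeGroup.of (some i) *
              (FreeGroup.of none * FreeGroup.of (some i) * FreeGroup.of none)⁻¹) }

/-- The affine (`Ã`-type) braid group `B(Ã_n)`, with generators `σ_1, …, σ_n` and `a_{n+1}`. -/
abbrev BraidAff (n : ℕ) : Type := PresentedGroup (braidRelsAff n)



namespace StmtAux

section Sprod

variable {G : Type*} [Group G] (S : ℕ → G)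

/-- product `S a * S (a+1) * ⋯ * S (a+l-1)`. -/
def sprod : ℕ → ℕ → G
  | _, 0 => 1
  | a, l+1 => S a * sprod (a+1) l

@[simp] lemma sprod_zero (a : ℕ) : sprod S a 0 = 1 := rfl

lemma sprod_succ (a l : ℕ) : sprod S a (l+1) = S a * sprod S (a+1) l := rfl

lemma sprod_concat (a l : ℕ) : sprod S a (l+1) = sprod S a l * S (a+l) := by
  induction l generalizing a with
  | zero => simp [sprod_succ]
  | succ l ih =>
      rw [sprod_succ, ih (a+1), sprod_succ, mul_assoc]
      have h : a + 1 + l = a + (l+1) := by omega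
      rw [h]

lemma sprod_split (a l m : ℕ) : sprod S a (l+m) = sprod S a l * sprod S (a+l) m := by
  induction l generalizing a with
  | zero => simp
  | succ l ih =>
      have h : l + 1 + m = (l + m) + 1 := by omega
      rw [h, sprod_succ, ih (a+1), sprod_succ, mul_assoc]
      have h2 : a + 1 + l = a + (l+1) := by omega
      rw [h2]

lemma sprod_comm_left (x : G) (a l : ℕ)
    (h : ∀ k, a ≤ k → k < a + l → x * S k = S k * x) :
    x * sprod S a l = sprod S a l * x := by
  induction l generalizing a with
  | zero => simp
  | succ l ih =>
      rw [sprod_succ, ← mul_assoc, h a le_rfl (by omega), mul_assoc,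
        ih (a+1) (fun k hk1 hk2 => h k (by omega) (by omega)), mul_assoc]

lemma sprod_eq_listprod (a l : ℕ) :
    sprod S a l = ((List.range' a l).map S).prod := by
  induction l generalizing a with
  | zero => simp
  | succ l ih => rw [List.range'_succ, List.map_cons, List.prod_cons, sprod_succ, ih]

end Sprod

lemma sprod_eq_finprod {G : Type*} [Group G] (n : ℕ) (f : Fin n → G) :
    sprod (fun k => if h : k < n then f ⟨k, h⟩ else 1) 0 n =
      ((List.finRange n).map f).prod := by
  rw [sprod_eq_listprod, ← List.range_eq_range', ← List.map_coe_finRange_eq_range, List.map_map]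
  congr 1
  refine List.map_congr_left (fun i _ => ?_)
  simp [Function.comp, i.isLt]

section BraidLemmas

variable {G : Type*} [Group G] (S : ℕ → G) (n : ℕ)
  (hc : ∀ i j, i + 2 ≤ j → j < n → S i * S j = S j * S i)
  (hb : ∀ i, i + 1 < n → S i * S (i+1) * S i = S (i+1) * S i * S (i+1))

include hc hb

lemma braid_L2 (i : ℕ) (hi : i + 1 < n) :
    sprod S 0 n * S i = S (i+1) * sprod S 0 n := by
  obtain ⟨m, rfl⟩ : ∃ m, n = i + 2 + m := ⟨n - (i+2), by omega⟩
  have hd : sprod S 0 (i+2+m) = sprod S 0 i * (S i * (S (i+1) * sprod S (i+2) m)) := by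
    have h1 : i + 2 + m = i + (m + 1 + 1) := by omega
    rw [h1, sprod_split S 0 i (m+1+1), sprod_succ S (0+i) (m+1), sprod_succ S (0+i+1) m]
    simp only [Nat.zero_add]
  have hQ : S i * sprod S (i+2) m = sprod S (i+2) m * S i :=
    sprod_comm_left S (S i) (i+2) m (fun k hk1 hk2 => hc i k hk1 (by omega))
  have hP : S (i+1) * sprod S 0 i = sprod S 0 i * S (i+1) :=
    sprod_comm_left S (S (i+1)) 0 i (fun k hk1 hk2 => (hc k (i+1) (by omega) (by omega)).symm)
  calc sprod S 0 (i+2+m) * S i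
      = sprod S 0 i * (S i * (S (i+1) * (sprod S (i+2) m * S i))) := by rw [hd]; group
    _ = sprod S 0 i * (S i * (S (i+1) * (S i * sprod S (i+2) m))) := by rw [← hQ]
    _ = sprod S 0 i * (S i * S (i+1) * S i) * sprod S (i+2) m := by group
    _ = sprod S 0 i * (S (i+1) * S i * S (i+1)) * sprod S (i+2) m := by
        rw [hb i (by omega)]
    _ = sprod S 0 i * S (i+1) * (S i * (S (i+1) * sprod S (i+2) m)) := by group
    _ = S (i+1) * (sprod S 0 i * (S i * (S (i+1) * sprod S (i+2) m))) := by
        rw [← hP]; group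
    _ = S (i+1) * sprod S 0 (i+2+m) := by rw [hd]

lemma braid_L1 (l k : ℕ) (hkl : k + l < n) :
    sprod S k l * S (k+l) * (sprod S k l)⁻¹ =
      (sprod S (k+1) l)⁻¹ * (S k * sprod S (k+1) l) := by
  induction l generalizing k with
  | zero => simp
  | succ l ih =>
      have hT : S k * sprod S (k+2) l = sprod S (k+2) l * S k :=
        sprod_comm_left S (S k) (k+2) l (fun j hj1 hj2 => hc k j hj1 (by omega))
      have hbk : S k * S (k+1) * S k = S (k+1) * S k * S (k+1) := hb k (by omega)
      have hTc : Commute (S k) (sprod S (k+2) l) := hT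
      have hT' : S k * (sprod S (k+2) l)⁻¹ = (sprod S (k+2) l)⁻¹ * S k := (hTc.inv_right).eq
      have hT'' : sprod S (k+2) l * (S k)⁻¹ = (S k)⁻¹ * sprod S (k+2) l := ((hTc.inv_left).symm).eq
      have habk : S k * S (k+1) * (S k)⁻¹ = (S (k+1))⁻¹ * (S k * S (k+1)) := by
        calc S k * S (k+1) * (S k)⁻¹ = (S (k+1))⁻¹ * (S (k+1) * S k * S (k+1)) * (S k)⁻¹ := by group
          _ = (S (k+1))⁻¹ * (S k * S (k+1) * S k) * (S k)⁻¹ := by rw [hbk]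
          _ = (S (k+1))⁻¹ * (S k * S (k+1)) := by group
      have ihk : sprod S (k+1) l * S (k+1+l) * (sprod S (k+1) l)⁻¹ =
          (sprod S (k+2) l)⁻¹ * (S (k+1) * sprod S (k+2) l) := ih (k+1) (by omega)
      have hidx : k + (l+1) = k + 1 + l := by omega
      calc sprod S k (l+1) * S (k+(l+1)) * (sprod S k (l+1))⁻¹
          = S k * (sprod S (k+1) l * S (k+1+l) * (sprod S (k+1) l)⁻¹) * (S k)⁻¹ := by
            rw [sprod_succ, hidx]; group
        _ = S k * ((sprod S (k+2) l)⁻¹ * (S (k+1) * sprod S (k+2) l)) * (S k)⁻¹ := by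
            rw [ihk]
        _ = (S k * (sprod S (k+2) l)⁻¹) * S (k+1) * (sprod S (k+2) l * (S k)⁻¹) := by
            group
        _ = ((sprod S (k+2) l)⁻¹ * S k) * S (k+1) * ((S k)⁻¹ * sprod S (k+2) l) := by
            rw [hT', hT'']
        _ = (sprod S (k+2) l)⁻¹ * (S k * S (k+1) * (S k)⁻¹) * sprod S (k+2) l := by
            group
        _ = (sprod S (k+2) l)⁻¹ * ((S (k+1))⁻¹ * (S k * S (k+1))) * sprod S (k+2) l := by
            rw [habk]
        _ = (sprod S (k+1) (l+1))⁻¹ * (S k * sprod S (k+1) (l+1)) := by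
            rw [sprod_succ S (k+1) l]; group

end BraidLemmas

lemma pres_rel {α : Type*} {rels : Set (FreeGroup α)} {x y : FreeGroup α}
    (h : x * y⁻¹ ∈ rels) :
    (PresentedGroup.mk rels x : PresentedGroup rels) = PresentedGroup.mk rels y := by
  have h1 : PresentedGroup.mk rels (x * y⁻¹) = 1 :=
    (QuotientGroup.eq_one_iff _).2 (Subgroup.subset_normalClosure h)
  rw [map_mul, map_inv, mul_inv_eq_one] at h1; exact h1

end StmtAux
namespace StmtAux

section Concrete

variable {n : ℕ}

/-- `σ_{k+1}` in `B(B_{n+1})`, as an `ℕ`-indexed family (1 out of range). -/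
def SB (n : ℕ) : ℕ → BraidB n := fun k =>
  if h : k < n then PresentedGroup.of (some ⟨k, h⟩) else 1

/-- `t` in `B(B_{n+1})`. -/
def tB (n : ℕ) : BraidB n := PresentedGroup.of none

/-- `σ_{k+1}` in `B(Ã_n)`. -/
def SA (n : ℕ) : ℕ → BraidAff n := fun k =>
  if h : k < n then PresentedGroup.of (some ⟨k, h⟩) else 1

/-- `a_{n+1}` in `B(Ã_n)`. -/
def AA (n : ℕ) : BraidAff n := PresentedGroup.of none

lemma SB_of (i : Fin n) : SB n i = PresentedGroup.of (some i) := by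
  simp [SB, i.isLt]

lemma SA_of (i : Fin n) : SA n i = PresentedGroup.of (some i) := by
  simp [SA, i.isLt]

lemma rbC (i j : ℕ) (h1 : i + 2 ≤ j) (h2 : j < n) :
    SB n i * SB n j = SB n j * SB n i := by
  have hi : i < n := by omega
  simp only [SB, dif_pos hi, dif_pos h2]
  exact pres_rel (Or.inl ⟨⟨i, hi⟩, ⟨j, h2⟩, h1, rfl⟩)

lemma rbB (i : ℕ) (h : i + 1 < n) :
    SB n i * SB n (i+1) * SB n i = SB n (i+1) * SB n i * SB n (i+1) := by
  have hi : i < n := by omega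
  simp only [SB, dif_pos hi, dif_pos h]
  exact pres_rel (Or.inr (Or.inl ⟨⟨i, hi⟩, ⟨i+1, h⟩, rfl, rfl⟩))

lemma rbT (i : ℕ) (h1 : 1 ≤ i) : SB n i * tB n = tB n * SB n i := by
  by_cases hi : i < n
  · simp only [SB, dif_pos hi, tB]
    exact pres_rel (Or.inr (Or.inr (Or.inl ⟨⟨i, hi⟩, h1, rfl⟩)))
  · simp [SB, dif_neg hi]

lemma rbQ (h0 : 0 < n) :
    SB n 0 * tB n * SB n 0 * tB n = tB n * SB n 0 * tB n * SB n 0 := by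
  simp only [SB, dif_pos h0, tB]
  exact pres_rel (Or.inr (Or.inr (Or.inr ⟨⟨0, h0⟩, rfl, rfl⟩)))

lemma raC (i j : ℕ) (h1 : i + 2 ≤ j) (h2 : j < n) :
    SA n i * SA n j = SA n j * SA n i := by
  have hi : i < n := by omega
  simp only [SA, dif_pos hi, dif_pos h2]
  exact pres_rel (Or.inl ⟨⟨i, hi⟩, ⟨j, h2⟩, h1, rfl⟩)

lemma raB (i : ℕ) (h : i + 1 < n) :
    SA n i * SA n (i+1) * SA n i = SA n (i+1) * SA n i * SA n (i+1) := by
  have hi : i < n := by omega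
  simp only [SA, dif_pos hi, dif_pos h]
  exact pres_rel (Or.inr (Or.inl ⟨⟨i, hi⟩, ⟨i+1, h⟩, rfl, rfl⟩))

lemma raAc (i : ℕ) (h1 : 1 ≤ i) (h2 : i + 2 ≤ n) :
    SA n i * AA n = AA n * SA n i := by
  have hi : i < n := by omega
  simp only [SA, dif_pos hi, AA]
  exact pres_rel (Or.inr (Or.inr (Or.inl ⟨⟨i, hi⟩, h1, h2, rfl⟩)))

lemma raAb (i : ℕ) (h : i = 0 ∨ i + 1 = n) (hi : i < n) :
    SA n i * AA n * SA n i = AA n * SA n i * AA n := by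
  simp only [SA, dif_pos hi, AA]
  exact pres_rel (Or.inr (Or.inr (Or.inr ⟨⟨i, hi⟩, h, rfl⟩)))

lemma phiB_eq : phiB n = tB n * sprod (SB n) 0 n := by
  rw [phiB]
  congr 1
  exact (sprod_eq_finprod n (fun i : Fin n => (PresentedGroup.of (some i) : BraidB n))).symm

lemma aB_eq (h0 : 0 < n) :
    aB n h0 = (tB n * sprod (SB n) 0 n) * SB n (n-1) *
      (tB n * sprod (SB n) 0 n)⁻¹ := by
  rw [aB, phiB_eq]
  congr 2
  simp [SB, Nat.sub_lt h0 one_pos]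

end Concrete

end StmtAux
namespace StmtAux

section SprodMore

variable {G : Type*} [Group G] (S : ℕ → G)

lemma sprod_concat' (a l : ℕ) (h : 0 < l) :
    sprod S a l = sprod S a (l-1) * S (a+l-1) := by
  obtain ⟨m, rfl⟩ : ∃ m, l = m + 1 := ⟨l - 1, by omega⟩
  rw [show m + 1 - 1 = m from rfl, show a + (m+1) - 1 = a + m from by omega, sprod_concat]

lemma sprod_succ' (a l : ℕ) (h : 0 < l) :
    sprod S a l = S a * sprod S (a+1) (l-1) := by
  obtain ⟨m, rfl⟩ : ∃ m, l = m + 1 := ⟨l - 1, by omega⟩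
  rw [show m + 1 - 1 = m from rfl, sprod_succ]

end SprodMore

section Bfacts

variable {n : ℕ} (hn : 2 ≤ n)

local notation "W" => sprod (SB n) 0 n
local notation "V" => sprod (SB n) 1 (n-1)
local notation "φφ" => tB n * sprod (SB n) 0 n

include hn

lemma F1 (i : ℕ) (hi : i + 1 < n) : φφ * SB n i = SB n (i+1) * φφ := by
  have l2 := braid_L2 (SB n) n (fun i j h1 h2 => rbC i j h1 h2)
    (fun i h => rbB i h) i hi
  calc tB n * W * SB n i = tB n * (W * SB n i) := by group
    _ = tB n * (SB n (i+1) * W) := by rw [l2]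
    _ = (tB n * SB n (i+1)) * W := by group
    _ = (SB n (i+1) * tB n) * W := by rw [← rbT (i+1) (by omega)]
    _ = SB n (i+1) * (tB n * W) := by group

lemma F1' (i : ℕ) (hi : i + 1 < n) : φφ * SB n i * φφ⁻¹ = SB n (i+1) := by
  rw [F1 hn i hi]; group

lemma tB_comm_V : tB n * V = V * tB n :=
  sprod_comm_left (SB n) (tB n) 1 (n-1) (fun k hk1 _ => (rbT k hk1).symm)

lemma F2 (h0 : 0 < n) :
    aB n h0 = V⁻¹ * ((tB n * SB n 0 * (tB n)⁻¹) * V) := by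
  have hW : W = sprod (SB n) 0 (n-1) * SB n (n-1) := by
    have := sprod_concat' (SB n) 0 n h0
    simpa using this
  have l1 := braid_L1 (SB n) n (fun i j h1 h2 => rbC i j h1 h2)
    (fun i h => rbB i h) (n-1) 0 (by omega)
  rw [Nat.zero_add] at l1
  -- l1 : sprod SB 0 (n-1) * SB (n-1) * (sprod SB 0 (n-1))⁻¹ = V⁻¹ * (SB 0 * V)
  have htv : Commute (tB n) V := tB_comm_V hn
  calc aB n h0 = tB n * (sprod (SB n) 0 (n-1) * SB n (n-1) * (sprod (SB n) 0 (n-1))⁻¹) * (tB n)⁻¹ := by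
        rw [aB_eq h0, hW]; group
    _ = tB n * (V⁻¹ * (SB n 0 * V)) * (tB n)⁻¹ := by rw [l1]
    _ = (tB n * V⁻¹) * SB n 0 * (V * (tB n)⁻¹) := by group
    _ = (V⁻¹ * tB n) * SB n 0 * ((tB n)⁻¹ * V) := by
        rw [htv.inv_right.eq, (htv.inv_left.symm).eq]
    _ = V⁻¹ * ((tB n * SB n 0 * (tB n)⁻¹) * V) := by group

lemma F3 (h0 : 0 < n) : φφ * aB n h0 * φφ⁻¹ = SB n 0 := by
  have hWv : W = SB n 0 * V := by
    have := sprod_succ' (SB n) 0 n h0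
    simpa using this
  have key : SB n 0 * tB n * SB n 0 * tB n = tB n * SB n 0 * tB n * SB n 0 := rbQ h0
  calc φφ * aB n h0 * φφ⁻¹
      = (tB n * SB n 0 * tB n * SB n 0) * ((tB n)⁻¹ * (SB n 0)⁻¹ * (tB n)⁻¹) := by
        rw [F2 hn h0, hWv]; group
    _ = (SB n 0 * tB n * SB n 0 * tB n) * ((tB n)⁻¹ * (SB n 0)⁻¹ * (tB n)⁻¹) := by
        rw [← key]
    _ = SB n 0 := by group

lemma F4 (h0 : 0 < n) (i : ℕ) (h1 : 1 ≤ i) (h2 : i + 2 ≤ n) :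
    aB n h0 * SB n i = SB n i * aB n h0 := by
  have e1 : SB n i = φφ * SB n (i-1) * φφ⁻¹ := by
    have := F1' hn (i-1) (by omega)
    rw [show i - 1 + 1 = i by omega] at this
    exact this.symm
  have e2 : aB n h0 = φφ * SB n (n-1) * φφ⁻¹ := by
    rw [aB_eq h0]
  have comm : SB n (i-1) * SB n (n-1) = SB n (n-1) * SB n (i-1) :=
    rbC (i-1) (n-1) (by omega) (by omega)
  calc aB n h0 * SB n i = φφ * (SB n (n-1) * SB n (i-1)) * φφ⁻¹ := by
        rw [e1, e2]; group
    _ = φφ * (SB n (i-1) * SB n (n-1)) * φφ⁻¹ := by rw [← comm]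
    _ = SB n i * aB n h0 := by rw [e1, e2]; group

lemma F5 (h0 : 0 < n) :
    aB n h0 * SB n (n-1) * aB n h0 = SB n (n-1) * aB n h0 * SB n (n-1) := by
  have e2 : aB n h0 = φφ * SB n (n-1) * φφ⁻¹ := by rw [aB_eq h0]
  have e3 : SB n (n-1) = φφ * SB n (n-2) * φφ⁻¹ := by
    have := F1' hn (n-2) (by omega)
    rw [show n - 2 + 1 = n - 1 by omega] at this
    exact this.symm
  have braid : SB n (n-2) * SB n (n-1) * SB n (n-2)
      = SB n (n-1) * SB n (n-2) * SB n (n-1) := by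
    have := rbB (n := n) (n-2) (by omega)
    rw [show n - 2 + 1 = n - 1 by omega] at this
    exact this
  rw [e3, e2]
  calc (φφ * SB n (n-1) * φφ⁻¹) * (φφ * SB n (n-2) * φφ⁻¹) * (φφ * SB n (n-1) * φφ⁻¹)
      = φφ * (SB n (n-1) * SB n (n-2) * SB n (n-1)) * φφ⁻¹ := by group
    _ = φφ * (SB n (n-2) * SB n (n-1) * SB n (n-2)) * φφ⁻¹ := by rw [← braid]
    _ = (φφ * SB n (n-2) * φφ⁻¹) * (φφ * SB n (n-1) * φφ⁻¹) * (φφ * SB n (n-2) * φφ⁻¹) := by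
        group


lemma F6 (h0 : 0 < n) :
    SB n 0 * aB n h0 * SB n 0 = aB n h0 * SB n 0 * aB n h0 := by
  have e4 : SB n 0 = φφ * aB n h0 * φφ⁻¹ := (F3 hn h0).symm
  have e2 : aB n h0 = φφ * SB n (n-1) * φφ⁻¹ := by rw [aB_eq h0]
  have e5 : φφ⁻¹ * aB n h0 * φφ = SB n (n-1) := by rw [e2]; group
  rw [e4]
  calc (φφ * aB n h0 * φφ⁻¹) * aB n h0 * (φφ * aB n h0 * φφ⁻¹)
      = φφ * (aB n h0 * (φφ⁻¹ * aB n h0 * φφ) * aB n h0) * φφ⁻¹ := by group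
    _ = φφ * (aB n h0 * SB n (n-1) * aB n h0) * φφ⁻¹ := by rw [e5]
    _ = φφ * (SB n (n-1) * aB n h0 * SB n (n-1)) * φφ⁻¹ := by rw [F5 hn h0]
    _ = φφ * ((φφ⁻¹ * aB n h0 * φφ) * aB n h0 * (φφ⁻¹ * aB n h0 * φφ)) * φφ⁻¹ := by rw [e5]
    _ = aB n h0 * (φφ * aB n h0 * φφ⁻¹) * aB n h0 := by group

end Bfacts

end StmtAux
namespace StmtAux

section Iota

variable {n : ℕ}

/-- the generator images for `ι`. -/
noncomputable def iotaF (n : ℕ) (h0 : 0 < n) : Option (Fin n) → BraidB n :=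
  fun x => Option.elim x (aB n h0) (fun i => PresentedGroup.of (some i))

lemma iota_rels (hn : 2 ≤ n) :
    ∀ r ∈ braidRelsAff n, FreeGroup.lift (iotaF n (Nat.lt_of_lt_of_le (by decide) hn)) r = 1 := by
  have h0 : 0 < n := by omega
  rintro r (⟨i, j, hij, rfl⟩ | ⟨i, j, hij, rfl⟩ | ⟨i, hi1, hi2, rfl⟩ | ⟨i, hi, rfl⟩) <;>
    simp only [map_mul, map_inv, FreeGroup.lift_apply_of, iotaF, Option.elim] <;>
    rw [mul_inv_eq_one]
  · exact pres_rel (Or.inl ⟨i, j, hij, rfl⟩)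
  · exact pres_rel (Or.inr (Or.inl ⟨i, j, hij, rfl⟩))
  · rw [← SB_of i]
    exact (F4 hn h0 i hi1 hi2).symm
  · rcases hi with hi0 | hiN
    · have e : PresentedGroup.of (some i) = SB n 0 := by
        rw [← hi0]; exact (SB_of i).symm
      rw [e]
      exact F6 hn h0
    · have e : PresentedGroup.of (some i) = SB n (n-1) := by
        rw [show n - 1 = (i : ℕ) from by omega]; exact (SB_of i).symm
      rw [e]
      exact (F5 hn h0).symm

/-- The homomorphism `ι : B(Ã_n) → B(B_{n+1})`. -/
noncomputable def iota (hn : 2 ≤ n) : BraidAff n →* BraidB n :=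
  PresentedGroup.toGroup (iota_rels hn)

lemma iota_of_some (hn : 2 ≤ n) (i : Fin n) :
    iota hn (PresentedGroup.of (some i)) = PresentedGroup.of (some i) :=
  PresentedGroup.toGroup.of _

lemma iota_of_none (hn : 2 ≤ n) :
    iota hn (PresentedGroup.of none) = aB n (Nat.lt_of_lt_of_le (by decide) hn) :=
  PresentedGroup.toGroup.of _

end Iota

end StmtAux
namespace StmtAux

section CAut

variable {n : ℕ}

/-- generator images of the cyclic-shift endomorphism `c` of `B(Ã_n)`. -/
def cF (n : ℕ) : Option (Fin n) → BraidAff n :=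
  fun x => Option.elim x (SA n 0) (fun i => if (i : ℕ) + 1 < n then SA n ((i : ℕ) + 1) else AA n)

/-- generator images of the inverse shift. -/
def ciF (n : ℕ) : Option (Fin n) → BraidAff n :=
  fun x => Option.elim x (SA n (n-1)) (fun i => if (i : ℕ) = 0 then AA n else SA n ((i : ℕ) - 1))

lemma c_rels (hn : 2 ≤ n) :
    ∀ r ∈ braidRelsAff n, FreeGroup.lift (cF n) r = 1 := by
  rintro r (⟨i, j, hij, rfl⟩ | ⟨i, j, hij, rfl⟩ | ⟨i, hi1, hi2, rfl⟩ | ⟨i, hi, rfl⟩) <;>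
    simp only [map_mul, map_inv, FreeGroup.lift_apply_of, cF, Option.elim] <;>
    rw [mul_inv_eq_one]
  · -- commuting σ's
    have hi : (i : ℕ) + 1 < n := by have := j.isLt; omega
    rw [if_pos hi]
    by_cases hj : (j : ℕ) + 1 < n
    · rw [if_pos hj]
      exact raC (n := n) _ _ (by omega) hj
    · rw [if_neg hj]
      exact raAc (n := n) _ (by omega) (by omega)
  · -- braid σ's
    have hi : (i : ℕ) + 1 < n := by have := j.isLt; omega
    rw [if_pos hi]
    by_cases hj : (j : ℕ) + 1 < n
    · rw [if_pos hj, show (j : ℕ) + 1 = (i : ℕ) + 1 + 1 from by omega]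
      exact raB (n := n) _ (by omega)
    · rw [if_neg hj]
      exact raAb (n := n) _ (Or.inr (by have := j.isLt; omega)) (by have := j.isLt; omega)
  · -- a commutes with middle σ's
    have hi : (i : ℕ) + 1 < n := by omega
    rw [if_pos hi]
    exact (raC (n := n) 0 ((i : ℕ) + 1) (by omega) hi).symm
  · -- braid relations with a
    rcases hi with hi0 | hiN
    · rw [if_pos (show (i : ℕ) + 1 < n by omega), hi0]
      exact (raB (n := n) 0 (by omega)).symm
    · rw [if_neg (show ¬ ((i : ℕ) + 1 < n) by omega)]
      exact (raAb (n := n) 0 (Or.inl rfl) (by omega)).symm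

lemma ci_rels (hn : 2 ≤ n) :
    ∀ r ∈ braidRelsAff n, FreeGroup.lift (ciF n) r = 1 := by
  rintro r (⟨i, j, hij, rfl⟩ | ⟨i, j, hij, rfl⟩ | ⟨i, hi1, hi2, rfl⟩ | ⟨i, hi, rfl⟩) <;>
    simp only [map_mul, map_inv, FreeGroup.lift_apply_of, ciF, Option.elim] <;>
    rw [mul_inv_eq_one]
  · by_cases hi : (i : ℕ) = 0
    · rw [if_pos hi, if_neg (show ¬ ((j : ℕ) = 0) by omega)]
      exact (raAc (n := n) _ (by omega) (by have := j.isLt; omega)).symm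
    · rw [if_neg hi, if_neg (show ¬ ((j : ℕ) = 0) by omega)]
      exact raC (n := n) _ _ (by omega) (by have := j.isLt; omega)
  · by_cases hi : (i : ℕ) = 0
    · rw [if_pos hi, if_neg (show ¬ ((j : ℕ) = 0) by omega),
        show (j : ℕ) - 1 = 0 from by omega]
      exact (raAb (n := n) 0 (Or.inl rfl) (by omega)).symm
    · rw [if_neg hi, if_neg (show ¬ ((j : ℕ) = 0) by omega),
        show (j : ℕ) - 1 = ((i : ℕ) - 1) + 1 from by omega]
      exact raB (n := n) _ (by omega)
  · rw [if_neg (show ¬ ((i : ℕ) = 0) by omega)]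
    exact raC (n := n) ((i : ℕ) - 1) (n - 1) (by omega) (by omega)
  · rcases hi with hi0 | hiN
    · rw [if_pos hi0]
      exact (raAb (n := n) (n-1) (Or.inr (by omega)) (by omega)).symm
    · rw [if_neg (show ¬ ((i : ℕ) = 0) by omega),
        show (i : ℕ) - 1 = n - 2 from by omega]
      have := raB (n := n) (n-2) (by omega)
      rw [show n - 2 + 1 = n - 1 by omega] at this
      exact this

/-- the shift endomorphism. -/
def cHom (hn : 2 ≤ n) : BraidAff n →* BraidAff n :=
  PresentedGroup.toGroup (c_rels hn)

/-- the inverse shift endomorphism. -/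
def ciHom (hn : 2 ≤ n) : BraidAff n →* BraidAff n :=
  PresentedGroup.toGroup (ci_rels hn)

lemma c_SA (hn : 2 ≤ n) (k : ℕ) (h : k + 1 < n) : cHom hn (SA n k) = SA n (k+1) := by
  rw [show SA n k = PresentedGroup.of (some ⟨k, by omega⟩) from by simp [SA, show k < n by omega]]
  rw [cHom, PresentedGroup.toGroup.of]
  simp [cF, h]

lemma c_SA_last (hn : 2 ≤ n) : cHom hn (SA n (n-1)) = AA n := by
  rw [show SA n (n-1) = PresentedGroup.of (some ⟨n-1, by omega⟩) from by
    simp [SA, show n - 1 < n by omega]]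
  rw [cHom, PresentedGroup.toGroup.of]
  simp only [cF, Option.elim, Fin.val_mk]
  rw [if_neg (show ¬ (n - 1 + 1 < n) by omega)]

lemma c_AA (hn : 2 ≤ n) : cHom hn (AA n) = SA n 0 := by
  rw [AA, cHom, PresentedGroup.toGroup.of]
  rfl

lemma ci_SA0 (hn : 2 ≤ n) : ciHom hn (SA n 0) = AA n := by
  rw [show SA n 0 = PresentedGroup.of (some ⟨0, by omega⟩) from by simp [SA, show 0 < n by omega]]
  rw [ciHom, PresentedGroup.toGroup.of]
  simp [ciF]

lemma ci_SA (hn : 2 ≤ n) (k : ℕ) (h1 : 1 ≤ k) (h2 : k < n) :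
    ciHom hn (SA n k) = SA n (k-1) := by
  rw [show SA n k = PresentedGroup.of (some ⟨k, h2⟩) from by simp [SA, h2]]
  rw [ciHom, PresentedGroup.toGroup.of]
  simp only [ciF, Option.elim, Fin.val_mk]
  rw [if_neg (show ¬ (k = 0) by omega)]

lemma ci_AA (hn : 2 ≤ n) : ciHom hn (AA n) = SA n (n-1) := by
  rw [AA, ciHom, PresentedGroup.toGroup.of]
  rfl

lemma c_ci (hn : 2 ≤ n) : (cHom hn).comp (ciHom hn) = MonoidHom.id _ := by
  ext x
  cases x with
  | none =>
      simp only [MonoidHom.comp_apply, MonoidHom.id_apply]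
      rw [show (PresentedGroup.of none : BraidAff n) = AA n from rfl, ci_AA hn,
        c_SA_last hn]
  | some i =>
      simp only [MonoidHom.comp_apply, MonoidHom.id_apply]
      rw [← SA_of i]
      by_cases hi : (i : ℕ) = 0
      · rw [hi, ci_SA0 hn, c_AA hn]
      · rw [ci_SA hn _ (by omega) i.isLt,
          c_SA hn ((i : ℕ) - 1) (by have := i.isLt; omega),
          show (i : ℕ) - 1 + 1 = (i : ℕ) from by omega]

lemma ci_c (hn : 2 ≤ n) : (ciHom hn).comp (cHom hn) = MonoidHom.id _ := by
  ext x
  cases x with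
  | none =>
      simp only [MonoidHom.comp_apply, MonoidHom.id_apply]
      rw [show (PresentedGroup.of none : BraidAff n) = AA n from rfl, c_AA hn, ci_SA0 hn]
  | some i =>
      simp only [MonoidHom.comp_apply, MonoidHom.id_apply]
      rw [← SA_of i]
      by_cases hi : (i : ℕ) + 1 < n
      · rw [c_SA hn _ hi, ci_SA hn _ (by omega) hi,
          show (i : ℕ) + 1 - 1 = (i : ℕ) from by omega]
      · rw [show (i : ℕ) = n - 1 from by have := i.isLt; omega, c_SA_last hn, ci_AA hn]

/-- the cyclic-shift automorphism of `B(Ã_n)`. -/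
def cA (hn : 2 ≤ n) : MulAut (BraidAff n) :=
  MonoidHom.toMulEquiv (cHom hn) (ciHom hn) (ci_c hn) (c_ci hn)

lemma cA_apply (hn : 2 ≤ n) (g : BraidAff n) : cA hn g = cHom hn g := rfl

end CAut

end StmtAux
namespace StmtAux

section AffFacts

variable {n : ℕ} (hn : 2 ≤ n)

local notation "WA" => sprod (SA n) 0 n
local notation "VA" => sprod (SA n) 1 (n-1)
local notation "YA" => sprod (SA n) 1 (n-2)
local notation "XA" => sprod (SA n) 2 (n-2)

lemma c_sprod (a l : ℕ) (h : a + l ≤ n - 1) :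
    cHom hn (sprod (SA n) a l) = sprod (SA n) (a+1) l := by
  induction l generalizing a with
  | zero => simp
  | succ l ih =>
      rw [sprod_succ, map_mul, c_SA hn a (by omega), ih (a+1) (by omega), sprod_succ]

lemma c_WA : cHom hn WA = VA * AA n := by
  have h1 : WA = sprod (SA n) 0 (n-1) * SA n (n-1) := by
    simpa using sprod_concat' (SA n) 0 n (by omega)
  rw [h1, map_mul, c_sprod hn 0 (n-1) (by omega), c_SA_last hn, Nat.zero_add]

lemma L2A' (i : ℕ) (h1 : 1 ≤ i) (h2 : i < n) :
    WA * SA n (i-1) * WA⁻¹ = SA n i := by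
  have l2 := braid_L2 (SA n) n (fun i j ha hb => raC (n := n) i j ha hb)
    (fun i ha => raB (n := n) i ha) (i-1) (by omega)
  rw [show i - 1 + 1 = i from by omega] at l2
  rw [l2]; group

lemma R3A (i : ℕ) (h1 : 1 ≤ i) (h2 : i < n) :
    cHom hn WA * SA n i * (cHom hn WA)⁻¹ = cHom hn (SA n i) := by
  have e : SA n i = cHom hn (SA n (i-1)) := by
    rw [c_SA hn (i-1) (by omega), show i - 1 + 1 = i from by omega]
  calc cHom hn WA * SA n i * (cHom hn WA)⁻¹
      = cHom hn (WA * SA n (i-1) * WA⁻¹) := by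
        rw [map_mul, map_mul, map_inv, ← e]
    _ = cHom hn (SA n i) := by rw [L2A' i h1 h2]

lemma lemM :
    WA * AA n * WA⁻¹ =
      SA n 0 * (cHom hn WA)⁻¹ * SA n 1 * cHom hn WA * (SA n 0)⁻¹ := by
  have l1A := braid_L1 (SA n) n (fun i j ha hb => raC (n := n) i j ha hb)
    (fun i ha => raB (n := n) i ha) (n-2) 1 (by omega)
  rw [show 1 + (n-2) = n - 1 from by omega] at l1A
  -- l1A : YA * SA (n-1) * YA⁻¹ = XA⁻¹ * (SA 1 * XA)
  have hVA1 : VA = SA n 1 * XA := by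
    have h := sprod_succ' (SA n) 1 (n-1) (by omega)
    rw [show n - 1 - 1 = n - 2 from by omega, show (1:ℕ)+1 = 2 from rfl] at h
    exact h
  have hVA2 : VA = YA * SA n (n-1) := by
    have h := sprod_concat' (SA n) 1 (n-1) (by omega)
    rw [show n - 1 - 1 = n - 2 from by omega, show 1 + (n-1) - 1 = n - 1 from by omega] at h
    exact h
  have hWA : WA = SA n 0 * VA := by
    have h := sprod_succ' (SA n) 0 n (by omega)
    rw [show n - 1 = n - 1 from rfl, Nat.zero_add] at h
    exact h
  have hAY : Commute (AA n) YA :=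
    (sprod_comm_left (SA n) (AA n) 1 (n-2)
      (fun k hk1 hk2 => (raAc (n := n) k hk1 (by omega)).symm))
  have br : SA n (n-1) * AA n * SA n (n-1) = AA n * SA n (n-1) * AA n :=
    raAb (n := n) (n-1) (Or.inr (by omega)) (by omega)
  have heq : SA n (n-1) * AA n * (SA n (n-1))⁻¹ = (AA n)⁻¹ * (SA n (n-1) * AA n) := by
    calc SA n (n-1) * AA n * (SA n (n-1))⁻¹
        = (AA n)⁻¹ * (AA n * SA n (n-1) * AA n) * (AA n)⁻¹ * (AA n * (SA n (n-1))⁻¹) := by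
          group
      _ = (AA n)⁻¹ * (SA n (n-1) * AA n * SA n (n-1)) * (AA n)⁻¹ * (AA n * (SA n (n-1))⁻¹) := by
          rw [br]
      _ = (AA n)⁻¹ * (SA n (n-1) * AA n) := by group
  calc WA * AA n * WA⁻¹
      = SA n 0 * YA * (SA n (n-1) * AA n * (SA n (n-1))⁻¹) * YA⁻¹ * (SA n 0)⁻¹ := by
        rw [hWA, hVA2]; group
    _ = SA n 0 * YA * ((AA n)⁻¹ * (SA n (n-1) * AA n)) * YA⁻¹ * (SA n 0)⁻¹ := by
        rw [heq]
    _ = SA n 0 * (YA * (AA n)⁻¹) * SA n (n-1) * (AA n * YA⁻¹) * (SA n 0)⁻¹ := by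
        group
    _ = SA n 0 * ((AA n)⁻¹ * YA) * SA n (n-1) * (YA⁻¹ * AA n) * (SA n 0)⁻¹ := by
        rw [(hAY.inv_left.symm).eq, hAY.inv_right.eq]
    _ = SA n 0 * (AA n)⁻¹ * (YA * SA n (n-1) * YA⁻¹) * AA n * (SA n 0)⁻¹ := by
        group
    _ = SA n 0 * (AA n)⁻¹ * (XA⁻¹ * (SA n 1 * XA)) * AA n * (SA n 0)⁻¹ := by
        rw [l1A]
    _ = SA n 0 * (SA n 1 * XA * AA n)⁻¹ * SA n 1 * (SA n 1 * XA * AA n) * (SA n 0)⁻¹ := by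
        group
    _ = SA n 0 * (VA * AA n)⁻¹ * SA n 1 * (VA * AA n) * (SA n 0)⁻¹ := by
        rw [hVA1]
    _ = SA n 0 * (cHom hn WA)⁻¹ * SA n 1 * cHom hn WA * (SA n 0)⁻¹ := by
        rw [c_WA hn]

lemma R4A :
    SA n 0 * ((cHom hn WA)⁻¹ * (SA n 1 * (cHom hn (cHom hn WA))⁻¹)) =
      (cHom hn WA)⁻¹ * (SA n 1 * ((cHom hn (cHom hn WA))⁻¹ * cHom hn (SA n 1))) := by
  have hg : AA n * (WA⁻¹ * (SA n 0 * (cHom hn WA)⁻¹)) =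
      (WA⁻¹ * (SA n 0 * (cHom hn WA)⁻¹)) * SA n 1 := by
    calc AA n * (WA⁻¹ * (SA n 0 * (cHom hn WA)⁻¹))
        = WA⁻¹ * (WA * AA n * WA⁻¹) * (SA n 0 * (cHom hn WA)⁻¹) := by group
      _ = WA⁻¹ * (SA n 0 * (cHom hn WA)⁻¹ * SA n 1 * cHom hn WA * (SA n 0)⁻¹) *
            (SA n 0 * (cHom hn WA)⁻¹) := by rw [lemM hn]
      _ = (WA⁻¹ * (SA n 0 * (cHom hn WA)⁻¹)) * SA n 1 := by group
  have hg2 := congrArg (cHom hn) hg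
  simp only [map_mul, map_inv] at hg2
  rw [c_AA hn, c_SA hn 0 (by omega), Nat.zero_add] at hg2
  calc SA n 0 * ((cHom hn WA)⁻¹ * (SA n 1 * (cHom hn (cHom hn WA))⁻¹))
      = SA n 0 * ((cHom hn WA)⁻¹ * (SA n 1 * (cHom hn (cHom hn WA))⁻¹)) := rfl
    _ = (cHom hn WA)⁻¹ * (SA n 1 * ((cHom hn (cHom hn WA))⁻¹ * cHom hn (SA n 1))) := by
        calc SA n 0 * ((cHom hn WA)⁻¹ * (SA n 1 * (cHom hn (cHom hn WA))⁻¹))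
            = SA n 0 * ((cHom hn WA)⁻¹ * (SA n 1 * (cHom hn (cHom hn WA))⁻¹)) := rfl
          _ = (cHom hn WA)⁻¹ * (SA n 1 * ((cHom hn (cHom hn WA))⁻¹ * cHom hn (SA n 1))) := by
              have h2 : SA n 0 * ((cHom hn WA)⁻¹ * (SA n 1 * (cHom hn (cHom hn WA))⁻¹))
                  = ((cHom hn WA)⁻¹ * (SA n 1 * (cHom hn (cHom hn WA))⁻¹)) * cHom hn (SA n 1) := by
                have := hg2
                calc SA n 0 * ((cHom hn WA)⁻¹ * (SA n 1 * (cHom hn (cHom hn WA))⁻¹))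
                    = (cHom hn (AA n * (WA⁻¹ * (SA n 0 * (cHom hn WA)⁻¹)))) * (cHom hn WA * (SA n 0)⁻¹ * SA n 0 * (cHom hn WA)⁻¹) := by
                      simp only [map_mul, map_inv, c_AA hn, c_SA hn 0 (by omega), Nat.zero_add]
                      group
                  _ = (cHom hn ((WA⁻¹ * (SA n 0 * (cHom hn WA)⁻¹)) * SA n 1)) * (cHom hn WA * (SA n 0)⁻¹ * SA n 0 * (cHom hn WA)⁻¹) := by
                      rw [hg]
                  _ = ((cHom hn WA)⁻¹ * (SA n 1 * (cHom hn (cHom hn WA))⁻¹)) * cHom hn (SA n 1) := by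
                      simp only [map_mul, map_inv, c_SA hn 0 (by omega), Nat.zero_add]
                      group
              rw [h2]; group

end AffFacts

end StmtAux
namespace StmtAux

section Theta

open SemidirectProduct

variable {n : ℕ}

/-- the action of `ℤ` on `B(Ã_n)` by powers of the shift automorphism. -/
def rho (hn : 2 ≤ n) : Multiplicative ℤ →* MulAut (BraidAff n) :=
  zpowersHom _ (cA hn)

/-- the generator of `Multiplicative ℤ`. -/
def zz : Multiplicative ℤ := Multiplicative.ofAdd 1

lemma rho_zz (hn : 2 ≤ n) (g : BraidAff n) : (rho hn) zz g = cHom hn g := by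
  show (cA hn ^ ((Multiplicative.ofAdd (1 : ℤ)).toAdd)) g = cHom hn g
  rw [toAdd_ofAdd, zpow_one]
  rfl

lemma zswap (hn : 2 ≤ n) (g : BraidAff n) :
    (inr zz : SemidirectProduct (BraidAff n) (Multiplicative ℤ) (rho hn)) * inl g =
      inl (cHom hn g) * inr zz := by
  have h := SemidirectProduct.inl_aut (φ := rho hn) zz g
  rw [rho_zz hn] at h
  rw [h, map_inv]
  group

/-- the generator images of `θ`. -/
def thetaF (hn : 2 ≤ n) :
    Option (Fin n) → SemidirectProduct (BraidAff n) (Multiplicative ℤ) (rho hn) :=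
  fun x => Option.elim x
    (inl ((cHom hn (sprod (SA n) 0 n))⁻¹) * inr zz)
    (fun i => inl (PresentedGroup.of (some i)))

lemma theta_rels (hn : 2 ≤ n) :
    ∀ r ∈ braidRelsB n, FreeGroup.lift (thetaF hn) r = 1 := by
  rintro r (⟨i, j, hij, rfl⟩ | ⟨i, j, hij, rfl⟩ | ⟨i, hi1, rfl⟩ | ⟨i, hi0, rfl⟩) <;>
    simp only [map_mul, map_inv, FreeGroup.lift_apply_of, thetaF, Option.elim] <;>
    rw [mul_inv_eq_one]
  · have e : (PresentedGroup.of (some i) * PresentedGroup.of (some j) : BraidAff n) =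
        PresentedGroup.of (some j) * PresentedGroup.of (some i) :=
      pres_rel (Or.inl ⟨i, j, hij, rfl⟩)
    rw [← map_mul, ← map_mul, e]
  · have e : (PresentedGroup.of (some i) * PresentedGroup.of (some j) *
        PresentedGroup.of (some i) : BraidAff n) =
        PresentedGroup.of (some j) * PresentedGroup.of (some i) *
          PresentedGroup.of (some j) :=
      pres_rel (Or.inr (Or.inl ⟨i, j, hij, rfl⟩))
    rw [← map_mul, ← map_mul, ← map_mul, ← map_mul, e]
  · -- t-commutation relators
    have hkey : (PresentedGroup.of (some i) : BraidAff n) * (cHom hn (sprod (SA n) 0 n))⁻¹ =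
        (cHom hn (sprod (SA n) 0 n))⁻¹ * cHom hn (SA n (i : ℕ)) := by
      rw [← SA_of i, ← R3A hn (i : ℕ) hi1 i.isLt]
      group
    calc inl (PresentedGroup.of (some i)) *
          (inl ((cHom hn (sprod (SA n) 0 n))⁻¹) * inr zz)
        = inl (PresentedGroup.of (some i) * (cHom hn (sprod (SA n) 0 n))⁻¹) * inr zz := by
          rw [map_mul]; group
      _ = inl ((cHom hn (sprod (SA n) 0 n))⁻¹ * cHom hn (SA n (i : ℕ))) * inr zz := by
          rw [hkey]
      _ = inl ((cHom hn (sprod (SA n) 0 n))⁻¹) * (inl (cHom hn (SA n (i : ℕ))) * inr zz) := by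
          rw [map_mul]; group
      _ = inl ((cHom hn (sprod (SA n) 0 n))⁻¹) * (inr zz * inl (SA n (i : ℕ))) := by
          rw [← zswap hn]
      _ = inl ((cHom hn (sprod (SA n) 0 n))⁻¹) * inr zz * inl (PresentedGroup.of (some i)) := by
          rw [SA_of i]; group
  · -- the relator `σ₁ t σ₁ t (t σ₁ t σ₁)⁻¹`
    have e0 : (PresentedGroup.of (some i) : BraidAff n) = SA n 0 := by
      rw [← SA_of i, hi0]
    rw [e0]
    refine SemidirectProduct.ext ?_ ?_
    · simp only [mul_left, mul_right, left_inl, right_inl, left_inr, right_inr,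
        SemidirectProduct.inv_left, SemidirectProduct.inv_right, inv_one,
        map_one, map_mul, MulAut.one_apply, MulAut.mul_apply, one_mul, mul_one,
        rho_zz hn, map_inv]
      rw [c_SA hn 0 (by omega), Nat.zero_add]
      simp only [mul_assoc]
      exact R4A hn
    · simp only [mul_left, mul_right, left_inl, right_inl, left_inr, right_inr,
        SemidirectProduct.inv_left, SemidirectProduct.inv_right, inv_one,
        one_mul, mul_one]

/-- the homomorphism `θ : B(B_{n+1}) → B(Ã_n) ⋊ ℤ`. -/
def theta (hn : 2 ≤ n) :
    BraidB n →* SemidirectProduct (BraidAff n) (Multiplicative ℤ) (rho hn) :=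
  PresentedGroup.toGroup (theta_rels hn)

lemma theta_of (hn : 2 ≤ n) (x : Option (Fin n)) :
    theta hn (PresentedGroup.of x) = thetaF hn x :=
  PresentedGroup.toGroup.of _

lemma theta_prod (hn : 2 ≤ n) :
    theta hn (((List.finRange n).map fun i => (PresentedGroup.of (some i) : BraidB n)).prod) =
      inl (sprod (SA n) 0 n) := by
  rw [map_list_prod, List.map_map]
  have h1 : (⇑(theta hn) ∘ fun i : Fin n => (PresentedGroup.of (some i) : BraidB n)) =
      fun i : Fin n =>
        (inl (PresentedGroup.of (some i) : BraidAff n) :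
          SemidirectProduct (BraidAff n) (Multiplicative ℤ) (rho hn)) := by
    funext i
    exact theta_of hn (some i)
  rw [h1]
  have hb : sprod (SA n) 0 n =
      ((List.finRange n).map fun i : Fin n => (PresentedGroup.of (some i) : BraidAff n)).prod :=
    sprod_eq_finprod n (fun i : Fin n => (PresentedGroup.of (some i) : BraidAff n))
  have h2 := map_list_prod
    (inl : BraidAff n →* SemidirectProduct (BraidAff n) (Multiplicative ℤ) (rho hn))
    ((List.finRange n).map fun i : Fin n => (PresentedGroup.of (some i) : BraidAff n))
  rw [hb, h2, List.map_map]
  rfl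

lemma theta_phi (hn : 2 ≤ n) : theta hn (phiB n) = inr zz := by
  rw [phiB, map_mul, theta_prod hn, theta_of hn none]
  show inl ((cHom hn (sprod (SA n) 0 n))⁻¹) * inr zz * inl (sprod (SA n) 0 n) = inr zz
  calc inl ((cHom hn (sprod (SA n) 0 n))⁻¹) * inr zz * inl (sprod (SA n) 0 n)
      = inl ((cHom hn (sprod (SA n) 0 n))⁻¹) * (inr zz * inl (sprod (SA n) 0 n)) := by group
    _ = inl ((cHom hn (sprod (SA n) 0 n))⁻¹) *
          (inl (cHom hn (sprod (SA n) 0 n)) * inr zz) := by rw [zswap hn]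
    _ = inl ((cHom hn (sprod (SA n) 0 n))⁻¹ * cHom hn (sprod (SA n) 0 n)) * inr zz := by
        rw [map_mul]; group
    _ = inr zz := by rw [inv_mul_cancel, map_one, one_mul]

lemma theta_aB (hn : 2 ≤ n) (h0 : 0 < n) :
    theta hn (aB n h0) = inl (PresentedGroup.of none) := by
  have hS : (PresentedGroup.of (some (⟨n-1, by omega⟩ : Fin n)) : BraidB n)
      = PresentedGroup.of (some (⟨n-1, by omega⟩ : Fin n)) := rfl
  rw [aB, map_mul, map_mul, map_inv, theta_phi hn, theta_of hn]
  show inr zz * inl (PresentedGroup.of (some (⟨n-1, by omega⟩ : Fin n))) * (inr zz)⁻¹ =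
    inl (PresentedGroup.of none)
  have e : (PresentedGroup.of (some (⟨n-1, by omega⟩ : Fin n)) : BraidAff n) = SA n (n-1) := by
    simp [SA, show n - 1 < n by omega]
  rw [e]
  have h := SemidirectProduct.inl_aut (φ := rho hn) zz (SA n (n-1))
  rw [rho_zz hn, map_inv] at h
  rw [← h, c_SA_last hn]
  rfl

end Theta

end StmtAux

theorem stmt_3 (n : ℕ) (hn : 2 ≤ n) :
    ∃ ι : BraidAff n →* BraidB n,
      Function.Injective ι ∧
      (∀ i : Fin n, ι (PresentedGroup.of (some i)) = PresentedGroup.of (some i)) ∧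
      ι (PresentedGroup.of none) = aB n (by omega) := by
  classical
  refine ⟨StmtAux.iota hn, ?_, fun i => StmtAux.iota_of_some hn i, StmtAux.iota_of_none hn⟩
  have hext : (StmtAux.theta hn).comp (StmtAux.iota hn) =
      (SemidirectProduct.inl :
        BraidAff n →* SemidirectProduct (BraidAff n) (Multiplicative ℤ) (StmtAux.rho hn)) := by
    apply PresentedGroup.ext
    intro x
    cases x with
    | some i =>
        rw [MonoidHom.comp_apply, StmtAux.iota_of_some hn, StmtAux.theta_of hn]
        rfl
    | none =>
        rw [MonoidHom.comp_apply, StmtAux.iota_of_none hn]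
        exact StmtAux.theta_aB hn (by omega)
  have hcomp : ∀ g : BraidAff n, StmtAux.theta hn (StmtAux.iota hn g) =
      SemidirectProduct.inl g := by
    intro g
    rw [← MonoidHom.comp_apply, hext]
  intro a b hab
  apply SemidirectProduct.inl_injective (φ := StmtAux.rho hn)
  rw [← hcomp a, ← hcomp b, hab]
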